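/- arXiv:2509.17358 — 3 statements merged into one kernel-verified Lean document; each statement's English description precedes it below -/
import Mathlib

section
/- For ℓ ≥ 3 and k ≥ 2, defining β_{k,ℓ} = C(N_{k,ℓ}-2, ℓ) · (N_{k,ℓ}-ℓ-2)! / [ (N_{k,ℓ-1}-1)! · (N_{k,ℓ-1}!)^{k-2} · (N_{k,ℓ-2}-1)! · (N_{k,ℓ-2}!)^{k-2} · ∏_{i=3}^{ℓ-1} (N_{k,ℓ-i}!)^{k-1} ] · A_ℓ, the recursion T_{k,ℓ} ≤ β_{k,ℓ} · ∏_{i=1}^{ℓ-1} T_{k,i}^{k-1} together with T_{k,1} = 1, T_{k,2} ≤ k-1 implies the closed form T_{k,ℓ} ≤ (k-1)^{(k-1)k^{ℓ-3}} · β_{k,ℓ} · ∏_{i=1}^{ℓ-3} β_{k,ℓ-i}^{(k-1)k^{i-1}}. -/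
/-- `Ncount k ℓ = (k^ℓ - 1)/(k - 1)`. -/
def Ncount (k l : ℕ) : ℕ := (k ^ l - 1) / (k - 1)

/-- A permutation `f` of `Fin n` is alternating (up-down). -/
def IsAlt (n : ℕ) (f : Equiv.Perm (Fin n)) : Prop :=
  ∀ (i : ℕ) (h : i + 1 < n),
    if i % 2 = 0 then f ⟨i, Nat.lt_of_succ_lt h⟩ < f ⟨i + 1, h⟩
    else f ⟨i + 1, h⟩ < f ⟨i, Nat.lt_of_succ_lt h⟩

/-- The Euler zigzag number `A_n`. -/
noncomputable def zigzagNum (n : ℕ) : ℕ := Nat.card {f : Equiv.Perm (Fin n) // IsAlt n f}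

/-- `β_{k,ℓ} = C(N_{k,ℓ}-2, ℓ) · (N_{k,ℓ}-ℓ-2)! /
[(N_{k,ℓ-1}-1)!·(N_{k,ℓ-1}!)^{k-2}·(N_{k,ℓ-2}-1)!·(N_{k,ℓ-2}!)^{k-2}·
∏_{i=3}^{ℓ-1}(N_{k,ℓ-i}!)^{k-1}] · A_ℓ`. -/
noncomputable def betaR (k l : ℕ) : ℝ :=
  (Nat.choose (Ncount k l - 2) l : ℝ) * ((Ncount k l - l - 2).factorial : ℝ) /
    (((Ncount k (l - 1) - 1).factorial : ℝ) *
      ((Ncount k (l - 1)).factorial : ℝ) ^ (k - 2) *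
      ((Ncount k (l - 2) - 1).factorial : ℝ) *
      ((Ncount k (l - 2)).factorial : ℝ) ^ (k - 2) *
      ∏ i ∈ Finset.Icc 3 (l - 1), ((Ncount k (l - i)).factorial : ℝ) ^ (k - 1)) *
    (zigzagNum l : ℝ)

lemma betaR_nonneg (k l : ℕ) : 0 ≤ betaR k l := by
  unfold betaR; positivity

noncomputable def Pb (k l : ℕ) : ℝ :=
  ((k : ℝ) - 1) ^ ((k - 1) * k ^ (l - 3)) * betaR k l *
    ∏ m ∈ Finset.Icc 3 (l - 1), betaR k m ^ ((k - 1) * k ^ (l - 1 - m))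

lemma reindex (k l : ℕ) (hl : 3 ≤ l) :
    ∏ i ∈ Finset.Icc 1 (l - 3), betaR k (l - i) ^ ((k - 1) * k ^ (i - 1)) =
      ∏ m ∈ Finset.Icc 3 (l - 1), betaR k m ^ ((k - 1) * k ^ (l - 1 - m)) := by
  apply Finset.prod_nbij' (fun i => l - i) (fun m => l - m)
  · intro i hi; simp only [Finset.mem_Icc] at *; omega
  · intro m hm; simp only [Finset.mem_Icc] at *; omega
  · intro i hi; simp only [Finset.mem_Icc] at hi; omega
  · intro m hm; simp only [Finset.mem_Icc] at hm; omega
  · intro i hi; simp only [Finset.mem_Icc] at hi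
    congr 2
    congr 1
    omega

lemma Pb_eq (k l : ℕ) (hl : 3 ≤ l) :
    ((k : ℝ) - 1) ^ ((k - 1) * k ^ (l - 3)) * betaR k l *
      ∏ i ∈ Finset.Icc 1 (l - 3), betaR k (l - i) ^ ((k - 1) * k ^ (i - 1)) = Pb k l := by
  rw [reindex k l hl]; rfl

lemma key (k : ℕ) (hk : 2 ≤ k) (n : ℕ) :
    ((k : ℝ) - 1) ^ (k - 1) * ∏ j ∈ Finset.Icc 3 (n + 2), Pb k j ^ (k - 1) =
      ((k : ℝ) - 1) ^ ((k - 1) * k ^ n) *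
        ∏ m ∈ Finset.Icc 3 (n + 2), betaR k m ^ ((k - 1) * k ^ (n + 2 - m)) := by
  obtain ⟨k', rfl⟩ : ∃ k', k = k' + 2 := ⟨k - 2, by omega⟩
  induction n with
  | zero =>
    rw [show Finset.Icc 3 2 = (∅ : Finset ℕ) from Finset.Icc_eq_empty (by omega)]
    simp
  | succ n ih =>
    rw [show n + 1 + 2 = n + 2 + 1 from rfl,
      Finset.prod_Icc_succ_top (by omega : 3 ≤ n + 2 + 1),
      Finset.prod_Icc_succ_top (by omega : 3 ≤ n + 2 + 1), ← mul_assoc, ih]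
    simp only [Pb, show k' + 2 - 1 = k' + 1 from rfl, show n + 2 + 1 - 3 = n from by omega,
      show n + 2 + 1 - 1 = n + 2 from by omega, show n + 1 + 2 - (n + 2 + 1) = 0 from by omega,
      pow_zero, mul_one]
    set b : ℝ := (↑(k' + 2) : ℝ) - 1 with hb
    set Q : ℝ := ∏ m ∈ Finset.Icc 3 (n + 2), betaR (k' + 2) m ^ ((k' + 1) * (k' + 2) ^ (n + 2 - m)) with hQdef
    have hQ : Q * Q ^ (k' + 1) =
        ∏ m ∈ Finset.Icc 3 (n + 2), betaR (k' + 2) m ^ ((k' + 1) * (k' + 2) ^ (n + 1 + 2 - m)) := by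
      have h1 : Q * Q ^ (k' + 1) = Q ^ (k' + 2) := by ring
      rw [h1, hQdef, ← Finset.prod_pow]
      refine Finset.prod_congr rfl fun m hm => ?_
      simp only [Finset.mem_Icc] at hm
      rw [← pow_mul]
      congr 1
      rw [show n + 1 + 2 - m = (n + 2 - m) + 1 from by omega, pow_succ]
      ring
    have hb2 : b ^ ((k' + 1) * (k' + 2) ^ n) * (b ^ ((k' + 1) * (k' + 2) ^ n)) ^ (k' + 1) =
        b ^ ((k' + 1) * (k' + 2) ^ (n + 1)) := by
      rw [← pow_mul, ← pow_add]
      congr 1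
      rw [pow_succ]; ring
    rw [← hQ, ← hb2]
    ring

/-- The recursion `T_ℓ ≤ β_{k,ℓ} ∏_{i=1}^{ℓ-1} T_i^{k-1}` with `T_1 = 1`,
`T_2 ≤ k-1` implies the closed form
`T_ℓ ≤ (k-1)^{(k-1)k^{ℓ-3}} β_{k,ℓ} ∏_{i=1}^{ℓ-3} β_{k,ℓ-i}^{(k-1)k^{i-1}}`. -/
theorem stmt5 (k : ℕ) (hk : 2 ≤ k) (T : ℕ → ℝ)
    (hpos : ∀ i, 1 ≤ i → 0 < T i) (h1 : T 1 = 1) (h2 : T 2 ≤ (k : ℝ) - 1)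
    (hrec : ∀ l, 3 ≤ l →
      T l ≤ betaR k l * ∏ i ∈ Finset.Icc 1 (l - 1), T i ^ (k - 1)) :
    ∀ l, 3 ≤ l →
      T l ≤ ((k : ℝ) - 1) ^ ((k - 1) * k ^ (l - 3)) * betaR k l *
        ∏ i ∈ Finset.Icc 1 (l - 3), betaR k (l - i) ^ ((k - 1) * k ^ (i - 1)) := by
  intro l
  induction l using Nat.strong_induction_on with
  | _ l ih =>
  intro hl
  obtain ⟨n, rfl⟩ : ∃ n, l = n + 3 := ⟨l - 3, by omega⟩
  have hk2 : (2 : ℝ) ≤ (k : ℝ) := by exact_mod_cast hk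
  have hb0 : (0 : ℝ) ≤ (k : ℝ) - 1 := by linarith
  rw [Pb_eq k (n + 3) (by omega)]
  have hTi : ∀ i ∈ Finset.Icc 3 (n + 2), T i ≤ Pb k i := by
    intro i hi
    simp only [Finset.mem_Icc] at hi
    have h := ih i (by omega) hi.1
    rwa [Pb_eq k i hi.1] at h
  have hrec' := hrec (n + 3) (by omega)
  have hsplit : Finset.Icc 1 (n + 3 - 1) = insert 1 (insert 2 (Finset.Icc 3 (n + 2))) := by
    ext x; simp only [Finset.mem_Icc, Finset.mem_insert]; omega
  rw [hsplit, Finset.prod_insert (by simp [Finset.mem_Icc]),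
    Finset.prod_insert (by simp [Finset.mem_Icc]), h1, one_pow, one_mul] at hrec'
  have h2p : T 2 ^ (k - 1) ≤ ((k : ℝ) - 1) ^ (k - 1) :=
    pow_le_pow_left₀ (hpos 2 (by omega)).le h2 _
  have hprod : ∏ i ∈ Finset.Icc 3 (n + 2), T i ^ (k - 1) ≤
      ∏ i ∈ Finset.Icc 3 (n + 2), Pb k i ^ (k - 1) := by
    refine Finset.prod_le_prod (fun i hi => ?_) (fun i hi => ?_)
    · simp only [Finset.mem_Icc] at hi
      exact pow_nonneg (hpos i (by omega)).le _
    · simp only [Finset.mem_Icc] at hi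
      exact pow_le_pow_left₀ (hpos i (by omega)).le (hTi i (by simp [Finset.mem_Icc]; omega)) _
  have hA : T 2 ^ (k - 1) * ∏ i ∈ Finset.Icc 3 (n + 2), T i ^ (k - 1) ≤
      ((k : ℝ) - 1) ^ (k - 1) * ∏ i ∈ Finset.Icc 3 (n + 2), Pb k i ^ (k - 1) := by
    refine mul_le_mul h2p hprod ?_ (pow_nonneg hb0 _)
    exact Finset.prod_nonneg fun i hi => by
      simp only [Finset.mem_Icc] at hi
      exact pow_nonneg (hpos i (by omega)).le _
  calc T (n + 3) ≤ betaR k (n + 3) *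
          (T 2 ^ (k - 1) * ∏ i ∈ Finset.Icc 3 (n + 2), T i ^ (k - 1)) := hrec'
    _ ≤ betaR k (n + 3) *
          (((k : ℝ) - 1) ^ (k - 1) * ∏ i ∈ Finset.Icc 3 (n + 2), Pb k i ^ (k - 1)) :=
        mul_le_mul_of_nonneg_left hA (betaR_nonneg k _)
    _ = betaR k (n + 3) * (((k : ℝ) - 1) ^ ((k - 1) * k ^ n) *
          ∏ m ∈ Finset.Icc 3 (n + 2), betaR k m ^ ((k - 1) * k ^ (n + 2 - m))) := by
        rw [key k hk n]
    _ = Pb k (n + 3) := by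
        simp only [Pb, show n + 3 - 3 = n from rfl, show n + 3 - 1 = n + 2 from rfl]
        ring
end

section
/- For k ≥ 2, the zigzag bound at level 4 satisfies Z_{zig}(4) < (N_{k,4} - 3)!, where Z_{zig}(4) = (k-1)^{(k-1)k} · β_{k,4} · β_{k,3}^{k-1}, N_{k,4} = k^3+k^2+k+1, β_{k,4} = A_4 · C(N_{k,4}-2, 4) · (N_{k,4}-6)! / [(N_{k,3}-1)!·(N_{k,3}!)^{k-2}·(N_{k,2}-1)!·(N_{k,2}!)^{k-2}], and β_{k,3} = A_3 · C(N_{k,3}-2, 3) / [(N_{k,2}-1)!·(N_{k,2}!)^{k-2}], with A_3 = 2, A_4 = 5. -/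
/-- `β_{k,4} = A_4·C(N_{k,4}-2,4)·(N_{k,4}-6)! /
[(N_{k,3}-1)!·(N_{k,3}!)^{k-2}·(N_{k,2}-1)!·(N_{k,2}!)^{k-2}]`. -/
noncomputable def beta4 (k : ℕ) : ℝ :=
  (zigzagNum 4 : ℝ) * (Nat.choose (Ncount k 4 - 2) 4 : ℝ) *
    ((Ncount k 4 - 6).factorial : ℝ) /
    (((Ncount k 3 - 1).factorial : ℝ) * ((Ncount k 3).factorial : ℝ) ^ (k - 2) *
      ((Ncount k 2 - 1).factorial : ℝ) * ((Ncount k 2).factorial : ℝ) ^ (k - 2))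

/-- `β_{k,3} = A_3·C(N_{k,3}-2,3) / [(N_{k,2}-1)!·(N_{k,2}!)^{k-2}]`. -/
noncomputable def beta3 (k : ℕ) : ℝ :=
  (zigzagNum 3 : ℝ) * (Nat.choose (Ncount k 3 - 2) 3 : ℝ) /
    (((Ncount k 2 - 1).factorial : ℝ) * ((Ncount k 2).factorial : ℝ) ^ (k - 2))

lemma isAlt_iff (n : ℕ) (f : Equiv.Perm (Fin n)) : IsAlt n f ↔
    ∀ i j : Fin n, (j : ℕ) = (i : ℕ) + 1 →
      (if (i : ℕ) % 2 = 0 then f i < f j else f j < f i) := by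
  constructor
  · intro h i j hj
    have hlt : (i : ℕ) + 1 < n := by rw [← hj]; exact j.isLt
    have hji : j = ⟨(i : ℕ) + 1, hlt⟩ := Fin.ext hj
    rw [hji]
    exact h i hlt
  · intro h i hlt
    exact h ⟨i, Nat.lt_of_succ_lt hlt⟩ ⟨i + 1, hlt⟩ rfl

instance (n : ℕ) : DecidablePred (IsAlt n) := fun f =>
  decidable_of_iff _ (isAlt_iff n f).symm

lemma zig3 : zigzagNum 3 = 2 := by
  rw [zigzagNum, Nat.card_eq_fintype_card]
  decide

lemma zig4 : zigzagNum 4 = 5 := by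
  rw [zigzagNum, Nat.card_eq_fintype_card]
  decide

lemma ncount2 (k : ℕ) (hk : 2 ≤ k) : Ncount k 2 = k + 1 := by
  obtain ⟨m, rfl⟩ : ∃ m, k = m + 2 := ⟨k - 2, by omega⟩
  have h1 : (m + 2) ^ 2 = (m + 1) * (m + 2 + 1) + 1 := by ring
  have h2 : (m + 2) ^ 2 - 1 = (m + 1) * (m + 2 + 1) := by omega
  simp only [Ncount, h2, Nat.add_sub_cancel]
  exact Nat.mul_div_cancel_left _ (by omega)

lemma ncount3 (k : ℕ) (hk : 2 ≤ k) : Ncount k 3 = k ^ 2 + k + 1 := by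
  obtain ⟨m, rfl⟩ : ∃ m, k = m + 2 := ⟨k - 2, by omega⟩
  have h1 : (m + 2) ^ 3 = (m + 1) * ((m + 2) ^ 2 + (m + 2) + 1) + 1 := by ring
  have h2 : (m + 2) ^ 3 - 1 = (m + 1) * ((m + 2) ^ 2 + (m + 2) + 1) := by omega
  simp only [Ncount, h2, Nat.add_sub_cancel]
  exact Nat.mul_div_cancel_left _ (by omega)

lemma ncount4 (k : ℕ) (hk : 2 ≤ k) : Ncount k 4 = k ^ 3 + k ^ 2 + k + 1 := by
  obtain ⟨m, rfl⟩ : ∃ m, k = m + 2 := ⟨k - 2, by omega⟩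
  have h1 : (m + 2) ^ 4 = (m + 1) * ((m + 2) ^ 3 + (m + 2) ^ 2 + (m + 2) + 1) + 1 := by ring
  have h2 : (m + 2) ^ 4 - 1 = (m + 1) * ((m + 2) ^ 3 + (m + 2) ^ 2 + (m + 2) + 1) := by omega
  simp only [Ncount, h2, Nat.add_sub_cancel]
  exact Nat.mul_div_cancel_left _ (by omega)

lemma key_s11 (k : ℕ) (hk : 2 ≤ k) :
    (k - 1) ^ ((k - 1) * k) *
      (5 * Nat.choose (k ^ 3 + k ^ 2 + k + 1 - 2) 4 *
        Nat.factorial (k ^ 3 + k ^ 2 + k + 1 - 6)) *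
      (2 * Nat.choose (k ^ 2 + k + 1 - 2) 3) ^ (k - 1) <
    Nat.factorial (k ^ 3 + k ^ 2 + k + 1 - 3) *
      (Nat.factorial (k ^ 2 + k) * Nat.factorial (k ^ 2 + k + 1) ^ (k - 2) *
        Nat.factorial k * Nat.factorial (k + 1) ^ (k - 2)) *
      (Nat.factorial k * Nat.factorial (k + 1) ^ (k - 2)) ^ (k - 1) := by
  rcases Nat.lt_or_ge k 4 with h4 | h4
  · interval_cases k
    · simp only [Nat.choose_eq_descFactorial_div_factorial]
      decide
    · simp only [Nat.choose_eq_descFactorial_div_factorial]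
      decide
  · -- general case k ≥ 4
    obtain ⟨m, hm⟩ : ∃ m, k ^ 3 + k ^ 2 + k + 1 = m + 15 :=
      ⟨k ^ 3 + k ^ 2 + k + 1 - 15, (Nat.sub_add_cancel (by nlinarith)).symm⟩
    rw [hm]
    simp only [show m + 15 - 2 = m + 13 by omega, show m + 15 - 6 = m + 9 by omega,
      show m + 15 - 3 = m + 12 by omega]
    set C3 := 2 * Nat.choose (k ^ 2 + k + 1 - 2) 3 with hC3
    set D := Nat.factorial k * Nat.factorial (k + 1) ^ (k - 2) with hD
    set G := Nat.factorial (k ^ 2 + k) with hG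
    set H := Nat.factorial (k ^ 2 + k + 1) with hH
    have hk1 : 1 ≤ k := by omega
    -- bundle bound
    have hA : (k - 1) ^ k * C3 ≤ G := by
      calc (k - 1) ^ k * C3 ≤ k ^ k * (2 * (k ^ 2 + k + 1) ^ 3) := by
            apply Nat.mul_le_mul
            · exact Nat.pow_le_pow_left (by omega) k
            · apply Nat.mul_le_mul_left
              calc Nat.choose (k ^ 2 + k + 1 - 2) 3 ≤ (k ^ 2 + k + 1 - 2) ^ 3 :=
                    Nat.choose_le_pow _ 3
                _ ≤ (k ^ 2 + k + 1) ^ 3 := Nat.pow_le_pow_left (Nat.sub_le _ _) 3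
        _ ≤ k ^ k * (2 * (k ^ 3) ^ 3) := by
            apply Nat.mul_le_mul_left
            apply Nat.mul_le_mul_left
            exact Nat.pow_le_pow_left (by nlinarith) 3
        _ = 2 * k ^ (k + 9) := by ring
        _ ≤ k * k ^ (k + 9) := Nat.mul_le_mul_right _ (by omega)
        _ = k ^ (k + 10) := by ring
        _ ≤ k ^ (k ^ 2 + 1) := Nat.pow_le_pow_right (by omega) (by nlinarith)
        _ ≤ Nat.factorial (k - 1) * k ^ (k ^ 2 + 1) :=
            Nat.le_mul_of_pos_left _ (Nat.factorial_pos _)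
        _ ≤ G := by
            have h := Nat.factorial_mul_pow_le_factorial (m := k - 1) (n := k ^ 2 + 1)
            rw [show k - 1 + 1 = k by omega, show k - 1 + (k ^ 2 + 1) = k ^ 2 + k by omega] at h
            exact h
    have hGH : ((k - 1) ^ k * C3) ^ (k - 1) ≤ G * H ^ (k - 2) := by
      calc ((k - 1) ^ k * C3) ^ (k - 1) ≤ G ^ (k - 1) := Nat.pow_le_pow_left hA _
        _ = G * G ^ (k - 2) := by
            rw [← pow_succ']
            congr 1
            omega
        _ ≤ G * H ^ (k - 2) := by
            apply Nat.mul_le_mul_left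
            exact Nat.pow_le_pow_left (Nat.factorial_le (by omega)) _
    have hB : 5 * (m + 13) < 24 * D ^ k := by
      have hm13 : m + 13 ≤ 4 * k ^ 3 := by nlinarith
      have hk3 : 0 < k ^ 3 := by positivity
      have h1 : 5 * (m + 13) < 24 * k ^ 3 := by omega
      have h2 : k ^ 3 ≤ k ^ k := Nat.pow_le_pow_right hk1 (by omega)
      have h3 : k ^ k ≤ D ^ k := by
        apply Nat.pow_le_pow_left
        calc k ≤ Nat.factorial k := Nat.self_le_factorial k
          _ ≤ D := Nat.le_mul_of_pos_right _ (by positivity)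
      omega
    have hc24 : Nat.choose (m + 13) 4 * 24 * Nat.factorial (m + 9) = Nat.factorial (m + 13) := by
      have h := Nat.choose_mul_factorial_mul_factorial (show 4 ≤ m + 13 by omega)
      rw [show m + 13 - 4 = m + 9 by omega] at h
      simpa [Nat.factorial] using h
    have hfac : Nat.factorial (m + 13) = (m + 13) * Nat.factorial (m + 12) :=
      Nat.factorial_succ (m + 12)
    have hDk : D ^ k = D ^ (k - 1) * D := by
      rw [← pow_succ]
      congr 1
      omega
    apply Nat.lt_of_mul_lt_mul_right (a := 24)
    calc (k - 1) ^ ((k - 1) * k) *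
          (5 * Nat.choose (m + 13) 4 * Nat.factorial (m + 9)) * C3 ^ (k - 1) * 24
        = ((k - 1) ^ k) ^ (k - 1) * C3 ^ (k - 1) *
            (5 * (Nat.choose (m + 13) 4 * 24 * Nat.factorial (m + 9))) := by
          rw [← pow_mul, mul_comm (k - 1) k]
          ring
      _ = ((k - 1) ^ k * C3) ^ (k - 1) * (5 * ((m + 13) * Nat.factorial (m + 12))) := by
          rw [hc24, hfac, ← mul_pow]
      _ = ((k - 1) ^ k * C3) ^ (k - 1) * (5 * (m + 13)) * Nat.factorial (m + 12) := by ring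
      _ < (G * H ^ (k - 2)) * (24 * D ^ k) * Nat.factorial (m + 12) := by
          have h1 : ((k - 1) ^ k * C3) ^ (k - 1) * (5 * (m + 13)) <
              (G * H ^ (k - 2)) * (24 * D ^ k) :=
            mul_lt_mul_of_le_of_lt_of_nonneg_of_pos hGH hB (Nat.zero_le _) (by positivity)
          exact Nat.mul_lt_mul_of_lt_of_le h1 (le_refl _) (Nat.factorial_pos _)
      _ = Nat.factorial (m + 12) * (G * H ^ (k - 2) * Nat.factorial k *
            Nat.factorial (k + 1) ^ (k - 2)) * D ^ (k - 1) * 24 := by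
          rw [hDk]
          ring

/-- For `k ≥ 2` the zigzag bound at level 4 satisfies
`Z_{zig}(4) = (k-1)^{(k-1)k}·β_{k,4}·β_{k,3}^{k-1} < (N_{k,4}-3)!`,
where `N_{k,4} = k³+k²+k+1`, `A_3 = 2` and `A_4 = 5`. -/
theorem stmt11 (k : ℕ) (hk : 2 ≤ k) :
    zigzagNum 3 = 2 ∧ zigzagNum 4 = 5 ∧
    Ncount k 4 = k ^ 3 + k ^ 2 + k + 1 ∧
    ((k : ℝ) - 1) ^ ((k - 1) * k) * beta4 k * beta3 k ^ (k - 1) <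
      ((Ncount k 4 - 3).factorial : ℝ) := by
  refine ⟨zig3, zig4, ncount4 k hk, ?_⟩
  have hkey := key_s11 k hk
  rw [beta4, beta3, zig3, zig4, ncount2 k hk, ncount3 k hk, ncount4 k hk]
  simp only [Nat.add_sub_cancel]
  have hkc : ((k : ℝ) - 1) = ((k - 1 : ℕ) : ℝ) := by
    rw [Nat.cast_sub (by omega)]
    norm_num
  rw [hkc, ← mul_div_assoc, div_pow, div_mul_div_comm, div_lt_iff₀ (by positivity)]
  have hkeyR : (((k - 1) ^ ((k - 1) * k) *
      (5 * Nat.choose (k ^ 3 + k ^ 2 + k + 1 - 2) 4 *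
        Nat.factorial (k ^ 3 + k ^ 2 + k + 1 - 6)) *
      (2 * Nat.choose (k ^ 2 + k + 1 - 2) 3) ^ (k - 1) : ℕ) : ℝ) <
      ((Nat.factorial (k ^ 3 + k ^ 2 + k + 1 - 3) *
      (Nat.factorial (k ^ 2 + k) * Nat.factorial (k ^ 2 + k + 1) ^ (k - 2) *
        Nat.factorial k * Nat.factorial (k + 1) ^ (k - 2)) *
      (Nat.factorial k * Nat.factorial (k + 1) ^ (k - 2)) ^ (k - 1) : ℕ) : ℝ) := by
    exact_mod_cast hkey
  push_cast at hkeyR ⊢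
  nlinarith [hkeyR]
end

section
/- For ℓ ≥ 4 and k ≥ 2, (N_{k,ℓ+1} - 2)! · (k-1)^{k-1} / ((N_{k,ℓ} - 1)! · (N_{k,ℓ}!)^{k-2}) ≤ (N_{k,ℓ+1} - 3)!, where N_{k,j} = (k^j - 1)/(k-1). Equivalently, (N_{k,ℓ+1} - 2) · (k-1)^{k-1} ≤ (N_{k,ℓ} - 1)! · (N_{k,ℓ}!)^{k-2}. -/
lemma Ncount_mul (k l : ℕ) (hk : 2 ≤ k) : Ncount k l * (k - 1) = k ^ l - 1 := by
  unfold Ncount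
  apply Nat.div_mul_cancel
  simpa using Nat.sub_dvd_pow_sub_pow k 1 l

lemma Ncount_succ (k l : ℕ) (hk : 2 ≤ k) :
    Ncount k (l + 1) = k * Ncount k l + 1 := by
  have h1 := Ncount_mul k l hk
  have h2 := Ncount_mul k (l + 1) hk
  have hpos : 0 < k - 1 := by omega
  apply Nat.eq_of_mul_eq_mul_right hpos
  rw [h2]
  have hm : 1 ≤ k ^ l := Nat.one_le_pow _ _ (by omega)
  have e : (k * Ncount k l + 1) * (k - 1) = k * (Ncount k l * (k - 1)) + (k - 1) := by ring
  rw [e, h1, pow_succ, Nat.mul_sub k (k ^ l) 1, mul_comm (k ^ l) k]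
  have : k * 1 ≤ k * k ^ l := Nat.mul_le_mul_left k hm
  omega

lemma Ncount_ge (k l : ℕ) (hk : 2 ≤ k) (hl : 4 ≤ l) : k ^ 3 ≤ Ncount k l := by
  have h1 := Ncount_mul k l hk
  have hm : 1 ≤ k ^ (l - 1) := Nat.one_le_pow _ _ (by omega)
  have hpow : k ^ (l - 1) * k = k ^ l := by
    rw [← pow_succ]
    congr 1
    omega
  have h2 : k ^ (l - 1) * (k - 1) ≤ Ncount k l * (k - 1) := by
    rw [h1, Nat.mul_sub (k ^ (l - 1)) k 1, hpow]
    omega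
  have h3 : k ^ (l - 1) ≤ Ncount k l := Nat.le_of_mul_le_mul_right h2 (by omega)
  exact le_trans (Nat.pow_le_pow_right (by omega) (by omega)) h3

lemma fact_ge_sq (n : ℕ) (hn : 6 ≤ n) : n ^ 2 ≤ (n - 1).factorial := by
  obtain ⟨m, rfl⟩ : ∃ m, n = m + 6 := ⟨n - 6, by omega⟩
  show (m + 6) ^ 2 ≤ (m + 5).factorial
  have e : (m + 5).factorial = (m + 5) * ((m + 4) * ((m + 3) * (m + 2).factorial)) := rfl
  rw [e]
  calc (m + 6) ^ 2 ≤ (m + 5) * ((m + 4) * (m + 3)) := by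
        have e1 : (m + 5) * ((m + 4) * (m + 3)) = m * m * m + 12 * (m * m) + 47 * m + 60 := by ring
        have e2 : (m + 6) ^ 2 = m * m + 12 * m + 36 := by ring
        omega
    _ ≤ (m + 5) * ((m + 4) * ((m + 3) * (m + 2).factorial)) := by
        gcongr
        exact Nat.le_mul_of_pos_right _ (Nat.factorial_pos _)

lemma key_ineq (k N : ℕ) (hk : 2 ≤ k) (hN : k ^ 3 ≤ N) :
    (k * N - 1) * (k - 1) ^ (k - 1) ≤ (N - 1).factorial * N.factorial ^ (k - 2) := by
  have hk8 : 8 ≤ k ^ 3 := by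
    calc 8 = 2 ^ 3 := rfl
    _ ≤ k ^ 3 := Nat.pow_le_pow_left hk 3
  have hN8 : 8 ≤ N := le_trans hk8 hN
  have hkN : k ≤ N := le_trans (Nat.le_self_pow (by norm_num) k) hN
  have h1 : k * N - 1 ≤ N ^ 2 := by
    have h := Nat.mul_le_mul_right N hkN
    have e : N ^ 2 = N * N := sq N
    omega
  have h2 : N ^ 2 ≤ (N - 1).factorial := fact_ge_sq N (by omega)
  have h3 : (k - 1) ^ (k - 1) ≤ N ^ (k - 2) := by
    rcases eq_or_lt_of_le hk with h | h
    · rw [← h]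
      simp
    · have hk3 : 3 ≤ k := h
      calc (k - 1) ^ (k - 1) ≤ k ^ (k - 1) := Nat.pow_le_pow_left (by omega) _
        _ ≤ k ^ (3 * (k - 2)) := Nat.pow_le_pow_right (by omega) (by omega)
        _ = (k ^ 3) ^ (k - 2) := by rw [← pow_mul]
        _ ≤ N ^ (k - 2) := Nat.pow_le_pow_left hN _
  have h4 : N ^ (k - 2) ≤ N.factorial ^ (k - 2) :=
    Nat.pow_le_pow_left (Nat.self_le_factorial N) _
  calc (k * N - 1) * (k - 1) ^ (k - 1) ≤ N ^ 2 * N ^ (k - 2) := Nat.mul_le_mul h1 h3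
    _ ≤ (N - 1).factorial * N.factorial ^ (k - 2) := Nat.mul_le_mul h2 h4

/-- For `ℓ ≥ 4` and `k ≥ 2`:
`(N_{k,ℓ+1}-2)!·(k-1)^{k-1}/((N_{k,ℓ}-1)!·(N_{k,ℓ}!)^{k-2}) ≤ (N_{k,ℓ+1}-3)!`;
equivalently `(N_{k,ℓ+1}-2)·(k-1)^{k-1} ≤ (N_{k,ℓ}-1)!·(N_{k,ℓ}!)^{k-2}`. -/
theorem stmt12 (k l : ℕ) (hk : 2 ≤ k) (hl : 4 ≤ l) :
    ((Ncount k (l + 1) - 2).factorial : ℝ) * ((k : ℝ) - 1) ^ (k - 1) /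
        (((Ncount k l - 1).factorial : ℝ) * ((Ncount k l).factorial : ℝ) ^ (k - 2)) ≤
      ((Ncount k (l + 1) - 3).factorial : ℝ) ∧
    (Ncount k (l + 1) - 2) * (k - 1) ^ (k - 1) ≤
      (Ncount k l - 1).factorial * (Ncount k l).factorial ^ (k - 2) := by
  set N := Ncount k l with hNdef
  have hsucc : Ncount k (l + 1) = k * N + 1 := Ncount_succ k l hk
  have hN3 : k ^ 3 ≤ N := Ncount_ge k l hk hl
  have hN8 : 8 ≤ N := by
    have : 8 ≤ k ^ 3 := by
      calc 8 = 2 ^ 3 := rfl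
      _ ≤ k ^ 3 := Nat.pow_le_pow_left hk 3
    omega
  have hkey : (k * N - 1) * (k - 1) ^ (k - 1) ≤ (N - 1).factorial * N.factorial ^ (k - 2) :=
    key_ineq k N hk hN3
  have hkN16 : 16 ≤ k * N := le_trans (by norm_num) (Nat.mul_le_mul hk hN8)
  constructor
  · rw [hsucc]
    have e2 : k * N + 1 - 2 = k * N - 1 := by omega
    have e3 : k * N + 1 - 3 = k * N - 2 := by omega
    have hfac : (k * N - 1).factorial = (k * N - 1) * (k * N - 2).factorial := by
      rw [show k * N - 1 = (k * N - 2) + 1 by omega, Nat.factorial_succ]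
    rw [e2, e3, hfac]
    have hden : (0 : ℝ) < ((N - 1).factorial : ℝ) * ((N.factorial : ℝ)) ^ (k - 2) := by
      apply mul_pos
      · exact_mod_cast Nat.factorial_pos _
      · apply pow_pos
        exact_mod_cast Nat.factorial_pos _
    rw [div_le_iff₀ hden]
    have hkeyR : ((k * N - 1 : ℕ) : ℝ) * ((k : ℝ) - 1) ^ (k - 1) ≤
        ((N - 1).factorial : ℝ) * ((N.factorial : ℝ)) ^ (k - 2) := by
      have hc : (k : ℝ) - 1 = ((k - 1 : ℕ) : ℝ) := by
        rw [Nat.cast_sub (by omega)]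
        simp
      rw [hc]
      exact_mod_cast hkey
    calc (((k * N - 1) * (k * N - 2).factorial : ℕ) : ℝ) * ((k : ℝ) - 1) ^ (k - 1)
        = ((k * N - 2).factorial : ℝ) * (((k * N - 1 : ℕ) : ℝ) * ((k : ℝ) - 1) ^ (k - 1)) := by
          push_cast
          ring
      _ ≤ ((k * N - 2).factorial : ℝ) * (((N - 1).factorial : ℝ) * ((N.factorial : ℝ)) ^ (k - 2)) :=
          mul_le_mul_of_nonneg_left hkeyR (by positivity)
  · rw [hsucc, show k * N + 1 - 2 = k * N - 1 by omega]
    exact hkey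
end
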